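/- Every path of π has at most 2b+1 outstanding elements; equivalently, a path cannot contain 2b+2 elements all having the same (defined) maximal rank. -/

import Mathlib

/-- The `b`-local minima of a path, represented as the list of values (in path order):
a position is kept iff its value is smaller than all values at distance at most `b` in the
list, comparisons with out-of-range (undefined) positions being disregarded. -/
def pmins (b : ℕ) (l : List ℕ) : List ℕ :=
  (List.range l.length).filterMap fun p =>
    if ∀ q ∈ List.range l.length, q ≠ p → p ≤ q + b → q ≤ p + b → l.getD p 0 < l.getD q 0
    then some (l.getD p 0) else none

/-- `plevel b l r` is the list of elements of `E_{r+1}` of the path `l` (0-indexed: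
`plevel b l 0 = l` is `E_1`), in path order. -/
def plevel (b : ℕ) (l : List ℕ) : ℕ → List ℕ
  | 0 => l
  | r + 1 => pmins b (plevel b l r)

/-- Advance `s` steps along the (level) list `l` from the element with value `v`;
`none` if undefined (i.e. `v ∉ l` or the advance would run past the end of the path). -/
def padv (s : ℕ) (l : List ℕ) (v : ℕ) : Option ℕ :=
  if v ∈ l ∧ l.idxOf v + s < l.length then some (l.getD (l.idxOf v + s) 0) else none

/-- Retreat `s` steps along the (level) list `l` from the element with value `v`;
`none` if undefined. -/
def pret (s : ℕ) (l : List ℕ) (v : ℕ) : Option ℕ :=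
  if v ∈ l ∧ s ≤ l.idxOf v then some (l.getD (l.idxOf v - s) 0) else none

/-- `iSeqP b l i k` is the element `i_{k+1}` of the (tentative) `b`-staircase from `i` on the
path `l`: `i_1 = i` and `i_{k+1} = π_k^b(i_k)`; `none` if undefined. -/
def iSeqP (b : ℕ) (l : List ℕ) (i : ℕ) : ℕ → Option ℕ
  | 0 => if i ∈ l then some i else none
  | k + 1 => (iSeqP b l i k).bind (padv b (plevel b l k))

/-- `jSeqP b l r m q` is the element `j_{r+1-q}` of the descending part of the `b`-staircase of
size `r` with middle `m` on the path `l`: `j_{r+1} = m` and `j_k = π_k^b(j_{k+1})`. -/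
def jSeqP (b : ℕ) (l : List ℕ) (r m : ℕ) : ℕ → Option ℕ
  | 0 => some m
  | q + 1 => (jSeqP b l r m q).bind (padv b (plevel b l (r - (q + 1))))

/-- There is a `b`-staircase of size `r` from `i` on the path `l`. -/
def IsStaircaseP (b : ℕ) (l : List ℕ) (r i : ℕ) : Prop :=
  ∃ m, iSeqP b l i r = some m ∧ m ∈ plevel b l r ∧ (jSeqP b l r m r).isSome

/-- There is an almost `b`-staircase of size `r` from `i` on the path `l`
(membership in `E_k` required only for `k ∈ [r]`). -/
def IsAlmostP (b : ℕ) (l : List ℕ) (r i : ℕ) : Prop :=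
  ∃ m, iSeqP b l i r = some m ∧ (jSeqP b l r m r).isSome

/-- The `b`-staircase of size `r` from `i` is the best one: on a path every almost
`b`-staircase is proper, so `i` has no almost `b`-staircase of size `r+1`. -/
def IsBestP (b : ℕ) (l : List ℕ) (r i : ℕ) : Prop :=
  IsStaircaseP b l r i ∧ ¬ IsAlmostP b l (r + 1) i

/-- There is a half `b`-staircase of size `r` from `i` on the path `l`:
`i_1 = i, …, i_{r+1} = m = j_r, j_{r-1}, …, j_1`. -/
def IsHalfP (b : ℕ) (l : List ℕ) (r i : ℕ) : Prop :=
  ∃ m, iSeqP b l i r = some m ∧ (jSeqP b l (r - 1) m (r - 1)).isSome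

/-- `ExtRank b l i v` says that the extended rank of `i` on the path `l` is `(t, h)`,
encoded (lexicographically faithfully) as the natural number `v = 2t + h`, where `t` is the
rank of `i` (the size of the best staircase from `i`) and `h` records whether a half staircase
of size `t+1` from `i` exists. -/
def ExtRank (b : ℕ) (l : List ℕ) (i v : ℕ) : Prop :=
  ∃ t, IsBestP b l t i ∧
    ((IsHalfP b l (t + 1) i ∧ v = 2 * t + 1) ∨ (¬ IsHalfP b l (t + 1) i ∧ v = 2 * t))

/-- `len(u,w) = min{k > 0 : π^k(u) = w}` (0 if unreachable). -/
noncomputable def lenTo {n : ℕ} (π : Equiv.Perm (Fin n)) (u w : Fin n) : ℕ :=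
  letI := Classical.propDecidable
  if h : ∃ k, 0 < k ∧ (⇑π)^[k] u = w then Nat.find h else 0

/-- The path obtained from the cycle of `π` containing `x` by cutting before `π(x)`
(i.e. setting `π(x) := ⊥`), as the list of its elements (values) in path order:
it starts at `π(x)` and ends at `x`. -/
noncomputable def pathOf {n : ℕ} (π : Equiv.Perm (Fin n)) (x : Fin n) : List ℕ :=
  (List.range (lenTo π x x)).map fun j => ((⇑π)^[j + 1] x).val

section StaircaseAux

open List

/-- If `u` comes strictly before `w` in a duplicate-free list, then `[u,w]` is a sublist. -/
lemma aux_pair_sublist : ∀ {l : List ℕ} (_ : l.Nodup) {u w : ℕ}, u ∈ l → w ∈ l →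
    l.idxOf u < l.idxOf w → [u, w] <+ l := by
  intro l
  induction l with
  | nil => simp
  | cons a tl ih =>
    intro hnd u w hu hw hlt
    by_cases hua : u = a
    · have hwa : w ≠ a := by
        intro h
        rw [hua, h] at hlt; exact lt_irrefl _ hlt
      have hwtl : w ∈ tl := (List.mem_cons.mp hw).resolve_left hwa
      rw [hua]
      exact List.Sublist.cons₂ a (List.singleton_sublist.mpr hwtl)
    · have hutl : u ∈ tl := by
        rcases List.mem_cons.mp hu with h | h
        · exact absurd h hua
        · exact h
      have hwa : w ≠ a := by
        intro h; subst h
        rw [List.idxOf_cons_self] at hlt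
        exact Nat.not_lt_zero _ hlt
      have hwtl : w ∈ tl := by
        rcases List.mem_cons.mp hw with h | h
        · exact absurd h hwa
        · exact h
      have h1 := List.idxOf_cons_ne tl (Ne.symm hua)
      have h2 := List.idxOf_cons_ne tl (Ne.symm hwa)
      rw [h1, h2] at hlt
      exact List.Sublist.cons a (ih (List.Nodup.of_cons hnd) hutl hwtl (Nat.succ_lt_succ_iff.mp hlt))

lemma aux_sublist_pair : ∀ {l : List ℕ} (_ : l.Nodup) {u w : ℕ}, [u, w] <+ l →
    l.idxOf u < l.idxOf w := by
  intro l
  induction l with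
  | nil => intro _ u w h; exact absurd (h.subset (by simp : u ∈ [u, w])) List.not_mem_nil
  | cons a tl ih =>
    intro hnd u w h
    rcases h with _ | _ | h
    -- cons case: [u,w] <+ tl ; cons₂ case: u = a, [w] <+ tl
    case cons h =>
      have hutl : u ∈ tl := h.subset (by simp)
      have hwtl : w ∈ tl := h.subset (by simp)
      have hna : a ∉ tl := (List.nodup_cons.mp hnd).1
      have hua : u ≠ a := fun he => hna (he ▸ hutl)
      have hwa : w ≠ a := fun he => hna (he ▸ hwtl)
      rw [List.idxOf_cons_ne tl (Ne.symm hua), List.idxOf_cons_ne tl (Ne.symm hwa)]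
      exact Nat.succ_lt_succ (ih (List.Nodup.of_cons hnd) h)
    case cons_cons h =>
      have hwtl : w ∈ tl := h.subset (by simp)
      have hna : a ∉ tl := (List.nodup_cons.mp hnd).1
      have hwa : w ≠ a := fun he => hna (he ▸ hwtl)
      rw [List.idxOf_cons_self, List.idxOf_cons_ne tl (Ne.symm hwa)]
      exact Nat.succ_pos _

/-- Sublists of duplicate-free lists preserve relative order. -/
lemma aux_idx_lt_of_sublist {s l : List ℕ} (hsl : s <+ l) (hl : l.Nodup) {u w : ℕ}
    (hu : u ∈ s) (hw : w ∈ s) (h : s.idxOf u < s.idxOf w) :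
    l.idxOf u < l.idxOf w :=
  aux_sublist_pair hl ((aux_pair_sublist (hsl.nodup hl) hu hw h).trans hsl)

lemma aux_filterMap_sublist_map {α β : Type*} (g : α → β) :
    ∀ (r : List α) (f : α → Option β) (_ : ∀ a, f a = none ∨ f a = some (g a)),
      r.filterMap f <+ r.map g := by
  intro r
  induction r with
  | nil => intro f _; simp
  | cons a tl ih =>
    intro f hf
    rw [List.filterMap_cons, List.map_cons]
    rcases hf a with h | h
    · rw [h]; exact List.Sublist.cons _ (ih f hf)
    · rw [h]; exact List.Sublist.cons₂ _ (ih f hf)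

lemma aux_map_getD_range (l : List ℕ) :
    (List.range l.length).map (fun p => l.getD p 0) = l := by
  apply List.ext_getElem
  · simp
  · intro i h1 h2
    simp only [List.getElem_map, List.getElem_range]
    rw [List.getD_eq_getElem]

lemma pmins_sublist (b : ℕ) (l : List ℕ) : pmins b l <+ l := by
  have h := aux_filterMap_sublist_map (fun p => l.getD p 0) (List.range l.length)
    (fun p => if ∀ q ∈ List.range l.length, q ≠ p → p ≤ q + b → q ≤ p + b →
        l.getD p 0 < l.getD q 0 then some (l.getD p 0) else none)
    (by intro a; split <;> simp)
  rw [aux_map_getD_range] at h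
  exact h

lemma plevel_sublist (b : ℕ) (l : List ℕ) (k : ℕ) : plevel b l (k + 1) <+ plevel b l k :=
  pmins_sublist b (plevel b l k)

lemma plevel_nodup {b : ℕ} {l : List ℕ} (hl : l.Nodup) (k : ℕ) : (plevel b l k).Nodup := by
  induction k with
  | zero => exact hl
  | succ k ih => exact (plevel_sublist b l k).nodup ih

lemma padv_eq_some_iff {s : ℕ} {l : List ℕ} {v w : ℕ} :
    padv s l v = some w ↔
      (v ∈ l ∧ l.idxOf v + s < l.length) ∧ w = l.getD (l.idxOf v + s) 0 := by
  unfold padv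
  split
  · rename_i h; simp [h, eq_comm]
  · rename_i h; simp [h]

lemma padv_adv {l : List ℕ} (hl : l.Nodup) {s v w : ℕ} (h : padv s l v = some w) :
    v ∈ l ∧ w ∈ l ∧ l.idxOf w = l.idxOf v + s ∧ l.idxOf v + s < l.length := by
  rcases padv_eq_some_iff.mp h with ⟨⟨hv, hlen⟩, hw⟩
  have hwe : w = l[l.idxOf v + s] := by rw [hw, List.getD_eq_getElem]
  refine ⟨hv, ?_, ?_, hlen⟩
  · rw [hwe]; exact List.getElem_mem _
  · rw [hwe]; exact List.Nodup.idxOf_getElem hl _ _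

lemma padv_defined {l : List ℕ} {s v : ℕ} (hv : v ∈ l) (hlen : l.idxOf v + s < l.length) :
    padv s l v = some (l.getD (l.idxOf v + s) 0) := by
  unfold padv
  rw [if_pos ⟨hv, hlen⟩]

lemma padv_inj {l : List ℕ} (hl : l.Nodup) {s v v' w : ℕ}
    (h : padv s l v = some w) (h' : padv s l v' = some w) : v = v' := by
  obtain ⟨hv, _, hw, _⟩ := padv_adv hl h
  obtain ⟨hv', _, hw', _⟩ := padv_adv hl h'
  have : l.idxOf v = l.idxOf v' := by omega
  exact (List.idxOf_inj hv).mp this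

lemma iSeqP_inj {b : ℕ} {l : List ℕ} (hl : l.Nodup) :
    ∀ (k : ℕ) {i i' u : ℕ}, iSeqP b l i k = some u → iSeqP b l i' k = some u → i = i' := by
  intro k
  induction k with
  | zero =>
    intro i i' u h h'
    unfold iSeqP at h h'
    split at h
    · split at h'
      · injection h with h1; injection h' with h2; omega
      · exact absurd h' (by simp)
    · exact absurd h (by simp)
  | succ k ih =>
    intro i i' u h h'
    rw [iSeqP] at h h'
    rcases Option.bind_eq_some_iff.mp h with ⟨v, hv, hpv⟩
    rcases Option.bind_eq_some_iff.mp h' with ⟨v', hv', hpv'⟩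
    have := padv_inj (plevel_nodup hl k) hpv hpv'
    subst this
    exact ih hv hv'

lemma jSeqP_isSome_mono {b : ℕ} {l : List ℕ} {r m : ℕ} {q q' : ℕ} (h : q ≤ q')
    (hs : (jSeqP b l r m q').isSome) : (jSeqP b l r m q).isSome := by
  obtain ⟨d, rfl⟩ := Nat.exists_eq_add_of_le h
  induction d with
  | zero => exact hs
  | succ d ih =>
    apply ih (Nat.le_add_right _ _)
    rw [show q + (d + 1) = (q + d) + 1 by omega, jSeqP] at hs
    cases he : jSeqP b l r m (q + d) with
    | none => rw [he] at hs; simp at hs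
    | some _ => simp

lemma aux_pigeon {N : ℕ} (hN : 1 ≤ N) (g : Fin N → ℕ) (hg : Function.Injective g) :
    ∃ a0 a1 : Fin N, g a0 + (N - 1) ≤ g a1 := by
  classical
  set S : Finset ℕ := Finset.image g Finset.univ with hS
  have hcard : S.card = N := by
    rw [hS, Finset.card_image_of_injective _ hg, Finset.card_univ, Fintype.card_fin]
  have hne : S.Nonempty := by
    rw [← Finset.card_pos, hcard]; omega
  have hsub : S ⊆ Finset.Icc (S.min' hne) (S.max' hne) := by
    intro y hy
    exact Finset.mem_Icc.mpr ⟨S.min'_le y hy, S.le_max' y hy⟩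
  have hcard2 : N ≤ S.max' hne + 1 - S.min' hne := by
    have := Finset.card_le_card hsub
    rwa [hcard, Nat.card_Icc] at this
  have hmm : S.min' hne ≤ S.max' hne := S.min'_le _ (S.max'_mem hne)
  obtain ⟨a0, _, ha0⟩ := Finset.mem_image.mp (S.min'_mem hne)
  obtain ⟨a1, _, ha1⟩ := Finset.mem_image.mp (S.max'_mem hne)
  exact ⟨a0, a1, by omega⟩

lemma pathOf_nodup {n : ℕ} (π : Equiv.Perm (Fin n)) (x : Fin n) : (pathOf π x).Nodup := by
  classical
  unfold pathOf lenTo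
  split
  · rename_i h
    apply List.Nodup.map_on _ List.nodup_range
    intro j1 hj1 j2 hj2 heq
    rw [List.mem_range] at hj1 hj2
    have key : ∀ a c : ℕ, a < c → ¬(0 < c - a ∧ (⇑π)^[c - a] x = x) →
        ((⇑π)^[a + 1] x).val = ((⇑π)^[c + 1] x).val → False := by
      intro a c hac hnot hval
      have heq2 : (⇑π)^[a + 1] x = (⇑π)^[c + 1] x := Fin.val_injective hval
      have hcomm : (⇑π)^[c + 1] x = (⇑π)^[c - a] ((⇑π)^[a + 1] x) := by
        rw [← Function.iterate_add_apply]
        congr 1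
        omega
      have hfix : (⇑π)^[a + 1] ((⇑π)^[c - a] x) = (⇑π)^[a + 1] x := by
        rw [← Function.iterate_add_apply, Nat.add_comm, Function.iterate_add_apply,
          ← hcomm, ← heq2]
      have hx : (⇑π)^[c - a] x = x := (π.injective.iterate (a + 1)) hfix
      exact hnot ⟨by omega, hx⟩
    rcases lt_trichotomy j1 j2 with hlt | heqj | hlt
    · have h2 : ¬(0 < j2 - j1 ∧ (⇑π)^[j2 - j1] x = x) :=
        @Nat.find_min _ (fun a => Classical.propDecidable _) h _ (Nat.lt_of_le_of_lt (Nat.sub_le _ _) hj2)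
      exact absurd heq (fun hc => key j1 j2 hlt h2 hc)
    · exact heqj
    · have h2 : ¬(0 < j1 - j2 ∧ (⇑π)^[j1 - j2] x = x) :=
        @Nat.find_min _ (fun a => Classical.propDecidable _) h _ (Nat.lt_of_le_of_lt (Nat.sub_le _ _) hj1)
      exact absurd heq.symm (fun hc => key j2 j1 hlt h2 hc)
  · simp

end StaircaseAux

/-- Every path of `π` has at most `2b+1` outstanding elements; equivalently,
a path cannot contain `2b+2` (distinct) elements all having the same (defined) maximal rank. -/
theorem outstanding_at_most (n b : ℕ) (hb : 1 ≤ b) (π : Equiv.Perm (Fin n)) (x : Fin n)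
    (P : List ℕ) (hP : P = pathOf π x)
    (t : ℕ) (f : Fin (2 * b + 2) → ℕ) (hinj : Function.Injective f)
    (hmem : ∀ a, f a ∈ P) (hrank : ∀ a, IsBestP b P t (f a))
    (hmax : ∀ w ∈ P, ∀ t', IsBestP b P t' w → t' ≤ t) :
    False := by
  classical
  have hndP : P.Nodup := by rw [hP]; exact pathOf_nodup π x
  have hnd : ∀ k, (plevel b P k).Nodup := plevel_nodup hndP
  choose m hm1 hm2 hm3 using fun a => (hrank a).1
  have hg : Function.Injective (fun a : Fin (2 * b + 2) => (plevel b P t).idxOf (m a)) := by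
    intro a a' he
    simp only at he
    have hme : m a = m a' := (List.idxOf_inj (hm2 a)).mp he
    have h2 : iSeqP b P (f a') t = some (m a) := by rw [hme]; exact hm1 a'
    exact hinj (iSeqP_inj hndP t (hm1 a) h2)
  obtain ⟨a0, a1, hpig⟩ := aux_pigeon (by omega) _ hg
  set p1 := (plevel b P t).idxOf (m a0) with hp1
  set p2 := (plevel b P t).idxOf (m a1) with hp2
  have hgap : p1 + (2 * b + 1) ≤ p2 := by omega
  have hlen : p2 < (plevel b P t).length := List.idxOf_lt_length_iff.mpr (hm2 a1)
  have hm'def := padv_defined (hm2 a0)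
    (show (plevel b P t).idxOf (m a0) + b < (plevel b P t).length by omega)
  set m' := (plevel b P t).getD ((plevel b P t).idxOf (m a0) + b) 0 with hm'
  obtain ⟨-, hm'mem, hm'idx, -⟩ := padv_adv (hnd t) hm'def
  have hiseq : iSeqP b P (f a0) (t + 1) = some m' := by
    rw [iSeqP, hm1 a0]
    simpa using hm'def
  have main : ∀ q, 1 ≤ q → q ≤ t + 1 → ∃ j k,
      jSeqP b P (t + 1) m' q = some j ∧ jSeqP b P t (m a1) (q - 1) = some k ∧
      j ∈ plevel b P (t + 1 - q) ∧ k ∈ plevel b P (t + 1 - q) ∧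
      (plevel b P (t + 1 - q)).idxOf j < (plevel b P (t + 1 - q)).idxOf k := by
    intro q
    induction q with
    | zero => intro h1 _; exact absurd h1 (by omega)
    | succ q ih =>
      intro _ hqt
      by_cases hq1 : q = 0
      · subst hq1
        have hm'len : (plevel b P t).idxOf m' + b < (plevel b P t).length := by omega
        have hJ1def := padv_defined hm'mem hm'len
        obtain ⟨-, hj1mem, hj1idx, -⟩ := padv_adv (hnd t) hJ1def
        have e : t + 1 - (0 + 1) = t := by omega
        refine ⟨(plevel b P t).getD ((plevel b P t).idxOf m' + b) 0, m a1, ?_,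
          by simp [jSeqP], ?_, ?_, ?_⟩
        · rw [jSeqP, e]
          simp only [jSeqP, Option.bind_some]
          exact hJ1def
        · rw [e]; exact hj1mem
        · rw [e]; exact hm2 a1
        · rw [e, hj1idx, ← hp2]; omega
      · obtain ⟨q', rfl⟩ : ∃ q', q = q' + 1 := ⟨q - 1, by omega⟩
        obtain ⟨j, k, hj, hk, hjm, hkm, hlt⟩ := ih (by omega) (by omega)
        rw [Nat.add_sub_cancel] at hk
        have e1 : t + 1 - (q' + 1) = (t - (q' + 1)) + 1 := by omega
        rw [e1] at hjm hkm hlt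
        have hsub := plevel_sublist b P (t - (q' + 1))
        have hjm' := hsub.subset hjm
        have hkm' := hsub.subset hkm
        have hlt' := aux_idx_lt_of_sublist hsub (hnd _) hjm hkm hlt
        have hK : (jSeqP b P t (m a1) (q' + 1)).isSome :=
          jSeqP_isSome_mono (by omega) (hm3 a1)
        have hKeq : jSeqP b P t (m a1) (q' + 1) = padv b (plevel b P (t - (q' + 1))) k := by
          rw [jSeqP, hk]
          rfl
        rw [hKeq] at hK
        obtain ⟨k2, hk2⟩ := Option.isSome_iff_exists.mp hK
        obtain ⟨-, hk2mem, hk2idx, hk2len⟩ := padv_adv (hnd _) hk2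
        have hjlen : (plevel b P (t - (q' + 1))).idxOf j + b <
            (plevel b P (t - (q' + 1))).length := by omega
        have hJdef := padv_defined hjm' hjlen
        obtain ⟨-, hj2mem, hj2idx, -⟩ := padv_adv (hnd _) hJdef
        have e2 : t + 1 - (q' + 1 + 1) = t - (q' + 1) := by omega
        refine ⟨(plevel b P (t - (q' + 1))).getD ((plevel b P (t - (q' + 1))).idxOf j + b) 0,
          k2, ?_, ?_, ?_, ?_, ?_⟩
        · rw [jSeqP, hj]
          simp only [Option.bind_some]
          rw [e2]
          exact hJdef
        · rw [Nat.add_sub_cancel, hKeq]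
          exact hk2
        · rw [e2]; exact hj2mem
        · rw [e2]; exact hk2mem
        · rw [e2, hj2idx, hk2idx]; omega
  obtain ⟨j, k, hj, -, -, -, -⟩ := main (t + 1) (by omega) le_rfl
  exact (hrank a0).2 ⟨m', hiseq, by rw [hj]; rfl⟩
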